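/- Let s, y ∈ R^n and let B0, H0 be symmetric positive definite with H0 = B0^{-1}. Fix φ ∈ [0,1], assume s^T y > 0, set Δ0 = (1-φ)(y^T s)^2 + φ (y^T H0 y)(s^T B0 s) and Φ0 = (1-φ)(s^T y)^2 / Δ0, and define α̃ = 1/(s^T y) + Φ0 (y^T H0 y)/(s^T y)^2, β̃ = -Φ0/(y^T s), δ̃ = -(1-Φ0)/(y^T H0 y). Then Δ0 > 0 and the determinant α̃ δ̃ - β̃² equals (1/Δ0)(s^T B0 s)/λ0, where λ0 = 1/(-(1-φ)/(s^T B0 s) - φ/(s^T y)). -/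

import Mathlib

open Matrix

theorem lemma1_det (n : ℕ)
    (B0 H0 : Matrix (Fin n) (Fin n) ℝ)
    (hB0 : B0.PosDef) (hH0 : H0.PosDef) (hinv : H0 = B0⁻¹)
    (s y : Matrix (Fin n) (Fin 1) ℝ)
    (φ : ℝ) (hφ : φ ∈ Set.Icc (0 : ℝ) 1)
    (hsy : (sᵀ * y) 0 0 > 0) :
    let sty := (sᵀ * y) 0 0
    let sBs := (sᵀ * B0 * s) 0 0
    let yHy := (yᵀ * H0 * y) 0 0
    let Δ0 := (1 - φ) * sty ^ 2 + φ * yHy * sBs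
    let Φ0 := (1 - φ) * sty ^ 2 / Δ0
    let α := 1 / sty + Φ0 * yHy / sty ^ 2
    let β := -(Φ0 / sty)
    let δ := -((1 - Φ0) / yHy)
    let lam0 := 1 / (-((1 - φ) / sBs) - φ / sty)
    Δ0 > 0 ∧ α * δ - β ^ 2 = (1 / Δ0) * (sBs / lam0) := by
  intro sty sBs yHy Δ0 Φ0 α β δ lam0
  obtain ⟨hφ0, hφ1⟩ := hφ
  have hsty : sty = dotProduct (fun i => s i 0) (fun i => y i 0) := by
    simp [sty, Matrix.mul_apply, dotProduct]
  have hs : (fun i => s i 0) ≠ 0 := by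
    intro h
    have h0 : (0 : ℝ) < sty := hsy
    rw [hsty, h] at h0
    simp [dotProduct] at h0
  have hy : (fun i => y i 0) ≠ 0 := by
    intro h
    have h0 : (0 : ℝ) < sty := hsy
    rw [hsty, h] at h0
    simp [dotProduct] at h0
  have hsBs : 0 < sBs := by
    have := hB0.dotProduct_mulVec_pos (x := fun i => s i 0) hs
    have e : sBs = dotProduct (star (fun i => s i 0)) (B0.mulVec (fun i => s i 0)) := by
      simp only [sBs, Matrix.mul_apply, dotProduct, Matrix.mulVec, star_trivial,
        Finset.sum_mul, Finset.mul_sum]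
      rw [Finset.sum_comm]
      refine Finset.sum_congr rfl fun i _ => Finset.sum_congr rfl fun j _ => by rw [Matrix.transpose_apply]; ring
    rwa [e]
  have hyHy : 0 < yHy := by
    have := hH0.dotProduct_mulVec_pos (x := fun i => y i 0) hy
    have e : yHy = dotProduct (star (fun i => y i 0)) (H0.mulVec (fun i => y i 0)) := by
      simp only [yHy, Matrix.mul_apply, dotProduct, Matrix.mulVec, star_trivial,
        Finset.sum_mul, Finset.mul_sum]
      rw [Finset.sum_comm]
      refine Finset.sum_congr rfl fun i _ => Finset.sum_congr rfl fun j _ => by rw [Matrix.transpose_apply]; ring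
    rwa [e]
  have hΔdef : Δ0 = (1 - φ) * sty ^ 2 + φ * yHy * sBs := rfl
  have hΔ : 0 < Δ0 := by
    rcases eq_or_lt_of_le hφ1 with h1 | h1
    · have e : Δ0 = yHy * sBs := by rw [hΔdef, h1]; ring
      rw [e]; positivity
    · have h2 : 0 < (1 - φ) * sty ^ 2 := mul_pos (by linarith) (by positivity)
      have h3 : 0 ≤ φ * yHy * sBs := by positivity
      rw [hΔdef]; linarith
  refine ⟨hΔ, ?_⟩
  have hstyne : sty ≠ 0 := ne_of_gt hsy
  have hΔne : Δ0 ≠ 0 := ne_of_gt hΔ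
  have hsBsne : sBs ≠ 0 := ne_of_gt hsBs
  have hyHyne : yHy ≠ 0 := ne_of_gt hyHy
  simp only [α, β, δ, lam0, Φ0, div_div_eq_mul_div, div_one]
  rw [hΔdef]
  rw [hΔdef] at hΔne
  have hΔne2 : sty ^ 2 * (1 - φ) + φ * yHy * sBs ≠ 0 := by rw [mul_comm]; exact hΔne
  field_simp
  ring
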